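/- Let a < b be coprime positive integers. Then the binary Kronecker constant β(a,b) equals the angular Kronecker constant α(a,b) = 1/(2(a+b)). In particular, if a and b are both odd then μ_{a,b}(0,1/2) = μ_{a,b}(1/2,0) = 1/(2(a+b)). -/

import Mathlib

/-- Distance from a real number to the nearest integer. -/
noncomputable def dni (u : ℝ) : ℝ := |u - round u|

/-- Approximation cost of `(t1, t2)` relative to the two-element set `{a, b}`. -/
noncomputable def mu2 (a b : ℕ) (t1 t2 : ℝ) : ℝ :=
  ⨅ x : ℝ, max (dni (t1 - x * a)) (dni (t2 - x * b))

/-- Approximation cost of `(t1, t2, t3)` relative to the set `{a, b, n}`. -/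
noncomputable def mu3 (a b n : ℕ) (t1 t2 t3 : ℝ) : ℝ :=
  ⨅ x : ℝ, max (dni (t1 - x * a)) (max (dni (t2 - x * b)) (dni (t3 - x * n)))

/-- Angular Kronecker constant of `{a, b, n}`. -/
noncomputable def alpha3 (a b n : ℕ) : ℝ :=
  sSup {v : ℝ | ∃ t1 t2 t3 : ℝ, v = mu3 a b n t1 t2 t3}

/-- Binary Kronecker constant of `{a, b, n}`. -/
noncomputable def beta3 (a b n : ℕ) : ℝ :=
  sSup {v : ℝ | ∃ t1 t2 t3 : ℝ, t1 ∈ ({0, 1/2} : Set ℝ) ∧ t2 ∈ ({0, 1/2} : Set ℝ) ∧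
    t3 ∈ ({0, 1/2} : Set ℝ) ∧ v = mu3 a b n t1 t2 t3}

/-- Angular Kronecker constant of the two-element set `{a, b}`. -/
noncomputable def alpha2 (a b : ℕ) : ℝ :=
  sSup {v : ℝ | ∃ t1 t2 : ℝ, v = mu2 a b t1 t2}

/-- Binary Kronecker constant of the two-element set `{a, b}`. -/
noncomputable def beta2 (a b : ℕ) : ℝ :=
  sSup {v : ℝ | ∃ t1 t2 : ℝ, t1 ∈ ({0, 1/2} : Set ℝ) ∧ t2 ∈ ({0, 1/2} : Set ℝ) ∧
    v = mu2 a b t1 t2}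

lemma dni_nonneg (u : ℝ) : 0 ≤ dni u := abs_nonneg _

lemma dni_le_abs (u : ℝ) : dni u ≤ |u| := by
  have := round_le u 0
  simpa [dni] using this

lemma dni_add_int (u : ℝ) (m : ℤ) : dni (u + m) = dni u := by
  unfold dni
  rw [round_add_intCast]
  push_cast
  ring_nf

lemma mu2_le (a b : ℕ) (t1 t2 x : ℝ) :
    mu2 a b t1 t2 ≤ max (dni (t1 - x * a)) (dni (t2 - x * b)) := by
  apply ciInf_le
  refine ⟨0, ?_⟩
  rintro y ⟨x', rfl⟩
  exact le_trans (dni_nonneg _) (le_max_left _ _)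

lemma le_mu2 (a b : ℕ) (t1 t2 C : ℝ)
    (h : ∀ x : ℝ, C ≤ max (dni (t1 - x * a)) (dni (t2 - x * b))) :
    C ≤ mu2 a b t1 t2 := le_ciInf h

/-- Upper bound: `mu2 a b t1 t2 ≤ 1/(2(a+b))` for coprime positive `a, b`. -/
lemma mu2_le_bound (a b : ℕ) (ha : 0 < a) (hb : 0 < b) (hcop : Nat.Coprime a b)
    (t1 t2 : ℝ) : mu2 a b t1 t2 ≤ 1 / (2 * ((a : ℝ) + b)) := by
  have hab : (0 : ℝ) < (a : ℝ) + b := by positivity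
  have hane : (a : ℝ) ≠ 0 := by positivity
  set c : ℝ := (b : ℝ) * t1 - (a : ℝ) * t2 with hc
  set k : ℤ := round c with hk
  -- Bezout
  have hbez : (1 : ℤ) = a * Int.gcdA a b + b * Int.gcdB a b := by
    have := Int.gcd_eq_gcd_ab (a : ℤ) (b : ℤ)
    rw [Int.gcd_natCast_natCast, hcop] at this
    exact_mod_cast this
  set m : ℤ := k * Int.gcdB a b with hm
  set n : ℤ := -(k * Int.gcdA a b) with hn
  have hmn : (b : ℤ) * m - (a : ℤ) * n = k := by
    have h1 : (k : ℤ) * 1 = k * ((a:ℤ) * Int.gcdA a b + (b:ℤ) * Int.gcdB a b) := by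
      rw [← hbez]
    rw [hm, hn]; ring_nf; ring_nf at h1; linarith
  have hmnR : (b : ℝ) * m - (a : ℝ) * n = k := by exact_mod_cast hmn
  set u : ℝ := (c - k) / ((a : ℝ) + b) with hu
  set x : ℝ := (t1 - u - m) / a with hx
  have h1 : t1 - x * a = u + m := by
    rw [hx, div_mul_cancel₀ _ hane]
    ring
  have hsum : ((a : ℝ) + b) * u = c - k := by
    rw [hu]; field_simp
  have hxa : x * a = t1 - u - m := by linarith [h1]
  have h2 : t2 - x * b = -u + n := by
    have key : (a : ℝ) * (t2 - x * b) = (a : ℝ) * (-u + n) := by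
      have e1 : (a : ℝ) * (t2 - x * b) = (a : ℝ) * t2 - (b : ℝ) * (x * a) := by ring
      rw [e1, hxa]
      linear_combination hsum + hmnR + hc
    exact mul_left_cancel₀ hane key
  have hck : |c - k| ≤ 1 / 2 := by
    have := abs_sub_round c
    simpa [hk] using this
  have huabs : |u| ≤ 1 / (2 * ((a : ℝ) + b)) := by
    rw [hu, abs_div, abs_of_pos hab]
    rw [div_le_div_iff₀ hab (by positivity)]
    nlinarith
  calc mu2 a b t1 t2 ≤ max (dni (t1 - x * a)) (dni (t2 - x * b)) := mu2_le a b t1 t2 x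
    _ ≤ 1 / (2 * ((a : ℝ) + b)) := by
        rw [h1, h2]
        apply max_le
        · rw [dni_add_int]
          exact le_trans (dni_le_abs u) huabs
        · have : dni (-u + n) ≤ |(-u)| := by rw [dni_add_int]; exact dni_le_abs _
          rw [abs_neg] at this
          exact le_trans this huabs

/-- Lower bound when `b t1 - a t2 ≡ 1/2 (mod 1)`. -/
lemma mu2_ge_bound (a b : ℕ) (ha : 0 < a) (hb : 0 < b) (t1 t2 : ℝ)
    (hhalf : ∃ k : ℤ, (b : ℝ) * t1 - (a : ℝ) * t2 = k + 1 / 2) :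
    1 / (2 * ((a : ℝ) + b)) ≤ mu2 a b t1 t2 := by
  obtain ⟨k, hk⟩ := hhalf
  have hab : (0 : ℝ) < (a : ℝ) + b := by positivity
  apply le_mu2
  intro x
  set u : ℝ := t1 - x * a with hu
  set v : ℝ := t2 - x * b with hv
  have hbuav : (b : ℝ) * u - (a : ℝ) * v = (k : ℝ) + 1 / 2 := by
    rw [hu, hv]; linear_combination hk
  set k' : ℤ := k - b * round u + a * round v with hk'
  have hkey : (b : ℝ) * (u - round u) - (a : ℝ) * (v - round v) = (k' : ℝ) + 1 / 2 := by
    rw [hk']; push_cast; linear_combination hbuav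
  have habs : (1 : ℝ) / 2 ≤ |(b : ℝ) * (u - round u) - (a : ℝ) * (v - round v)| := by
    rw [hkey]
    rcases le_or_gt 0 k' with h | h
    · have : (0 : ℝ) ≤ (k' : ℝ) := by exact_mod_cast h
      rw [abs_of_pos (by linarith)]; linarith
    · have hk1 : k' ≤ -1 := by omega
      have : (k' : ℝ) ≤ -1 := by exact_mod_cast hk1
      rw [abs_of_neg (by linarith)]; linarith
  have htri : |(b : ℝ) * (u - round u) - (a : ℝ) * (v - round v)| ≤
      (b : ℝ) * dni u + (a : ℝ) * dni v := by
    calc |(b : ℝ) * (u - round u) - (a : ℝ) * (v - round v)|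
        ≤ |(b : ℝ) * (u - round u)| + |(a : ℝ) * (v - round v)| := abs_sub _ _
      _ = (b : ℝ) * dni u + (a : ℝ) * dni v := by
          rw [abs_mul, abs_mul, abs_of_nonneg (by positivity : (0:ℝ) ≤ (b:ℝ)),
            abs_of_nonneg (by positivity : (0:ℝ) ≤ (a:ℝ))]
          rfl
  have hmax : (b : ℝ) * dni u + (a : ℝ) * dni v ≤ ((a : ℝ) + b) * max (dni u) (dni v) := by
    have h1 : dni u ≤ max (dni u) (dni v) := le_max_left _ _
    have h2 : dni v ≤ max (dni u) (dni v) := le_max_right _ _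
    have hb' : (0 : ℝ) ≤ (b : ℝ) := by positivity
    have ha' : (0 : ℝ) ≤ (a : ℝ) := by positivity
    nlinarith
  rw [div_le_iff₀ (by positivity)]
  calc (1 : ℝ) ≤ 2 * ((b : ℝ) * dni u + (a : ℝ) * dni v) := by linarith
    _ ≤ 2 * (((a : ℝ) + b) * max (dni u) (dni v)) := by linarith
    _ = max (dni (t1 - x * a)) (dni (t2 - x * b)) * (2 * ((a : ℝ) + b)) := by
        rw [hu, hv]; ring

theorem stmt_11 (a b : ℕ) (ha : 0 < a) (hab : a < b) (hcop : Nat.Coprime a b) :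
    beta2 a b = alpha2 a b ∧ alpha2 a b = 1 / (2 * ((a : ℝ) + b)) ∧
    (Odd a → Odd b →
      mu2 a b 0 (1/2) = 1 / (2 * ((a : ℝ) + b)) ∧
      mu2 a b (1/2) 0 = 1 / (2 * ((a : ℝ) + b))) := by
  have hb : 0 < b := lt_trans ha hab
  set C : ℝ := 1 / (2 * ((a : ℝ) + b)) with hC
  have hub : ∀ t1 t2 : ℝ, mu2 a b t1 t2 ≤ C := fun t1 t2 => mu2_le_bound a b ha hb hcop t1 t2
  -- a witness binary pair achieving C
  have hodd_a : Odd a → mu2 a b 0 (1/2) = C := by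
    intro ⟨j, hj⟩
    refine le_antisymm (hub _ _) (mu2_ge_bound a b ha hb _ _ ⟨-(j : ℤ) - 1, ?_⟩)
    have : (a : ℝ) = 2 * j + 1 := by rw [hj]; push_cast; ring
    rw [this]; push_cast; ring
  have hodd_b : Odd b → mu2 a b (1/2) 0 = C := by
    intro ⟨j, hj⟩
    refine le_antisymm (hub _ _) (mu2_ge_bound a b ha hb _ _ ⟨(j : ℤ), ?_⟩)
    have : (b : ℝ) = 2 * j + 1 := by rw [hj]; push_cast; ring
    rw [this]; push_cast; ring
  have hwitness : ∃ t1 t2 : ℝ, t1 ∈ ({0, 1/2} : Set ℝ) ∧ t2 ∈ ({0, 1/2} : Set ℝ) ∧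
      mu2 a b t1 t2 = C := by
    rcases Nat.even_or_odd b with hbe | hbo
    · have hao : Odd a := by
        rcases Nat.even_or_odd a with hae | hao
        · exfalso
          have h2 : (2 : ℕ) ∣ Nat.gcd a b := Nat.dvd_gcd hae.two_dvd hbe.two_dvd
          rw [hcop] at h2; omega
        · exact hao
      exact ⟨0, 1/2, Or.inl rfl, Or.inr rfl, hodd_a hao⟩
    · exact ⟨1/2, 0, Or.inr rfl, Or.inl rfl, hodd_b hbo⟩
  obtain ⟨s1, s2, hs1, hs2, hseq⟩ := hwitness
  -- alpha2 = C
  have halpha : alpha2 a b = C := by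
    apply le_antisymm
    · have hne : {v : ℝ | ∃ t1 t2 : ℝ, v = mu2 a b t1 t2}.Nonempty :=
        ⟨mu2 a b 0 0, 0, 0, rfl⟩
      apply csSup_le hne
      rintro v ⟨t1, t2, rfl⟩
      exact hub t1 t2
    · rw [← hseq]
      apply le_csSup
      · exact ⟨C, by rintro v ⟨t1, t2, rfl⟩; exact hub t1 t2⟩
      · exact ⟨s1, s2, rfl⟩
  have hbeta : beta2 a b = C := by
    apply le_antisymm
    · have hne : {v : ℝ | ∃ t1 t2 : ℝ, t1 ∈ ({0, 1/2} : Set ℝ) ∧ t2 ∈ ({0, 1/2} : Set ℝ) ∧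
          v = mu2 a b t1 t2}.Nonempty := ⟨mu2 a b s1 s2, s1, s2, hs1, hs2, rfl⟩
      apply csSup_le hne
      rintro v ⟨t1, t2, _, _, rfl⟩
      exact hub t1 t2
    · rw [← hseq]
      apply le_csSup
      · exact ⟨C, by rintro v ⟨t1, t2, _, _, rfl⟩; exact hub t1 t2⟩
      · exact ⟨s1, s2, hs1, hs2, rfl⟩
  exact ⟨by rw [hbeta, halpha], halpha, fun hao hbo => ⟨hodd_a hao, hodd_b hbo⟩⟩
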